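/- Let R be the 4×4 Hermitian matrix with block-Toeplitz structure R = [[R₀, R₁],[R₁*, R₀]] where R₀ = [[a, b],[b̄, c]] and R₁ = [[1/2, 3/4],[0, 0]]... specifically R has rows (a, b, 1/2, 3/4), (b̄, c, 0, 0), (1/2, 0, a, b), (3/4, 0, b̄, c). If R is positive semidefinite, then the dimension of the null space of R is at most 1. In particular, dim N(R) < 2 = rank(B) for B = [I₂; O₂], so the condition 'B* Π_{N(R)} B invertible' fails for every PSD matrix of this form. -/

import Mathlib

open Matrix ComplexOrder

/-- Example: for the block-Toeplitz matrix `R` below (any `a, c : ℝ`, `b : ℂ`),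
positive semidefiniteness forces the null space of `R` to have dimension at
most 1: any two null vectors are linearly dependent. -/
theorem stmt_17 (a c : ℝ) (b : ℂ) :
    let R : Matrix (Fin 4) (Fin 4) ℂ :=
      !![(a : ℂ), b, 1/2, 3/4;
         (starRingEnd ℂ) b, (c : ℂ), 0, 0;
         1/2, 0, (a : ℂ), b;
         3/4, 0, (starRingEnd ℂ) b, (c : ℂ)]
    R.PosSemidef →
      ∀ v w : Fin 4 → ℂ, R *ᵥ v = 0 → R *ᵥ w = 0 →
        ∃ α β : ℂ, (α, β) ≠ 0 ∧ α • v + β • w = 0 := by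
  intro R hR v w hv hw
  have hq := (posSemidef_iff_dotProduct_mulVec.mp hR).2
  have h1 := hq ![1,0,0,0]
  simp [R, Matrix.mulVec, dotProduct, Fin.sum_univ_four] at h1
  have h2 : ∀ t : ℝ, 0 ≤ a*t^2 + 3/2*t + c := by
    intro t
    have h := hq ![(t:ℂ),0,0,1]
    simp [R, Matrix.mulVec, dotProduct, Fin.sum_univ_four] at h
    rw [show (↑t * (↑a * ↑t + 3 / 4) + (3 / 4 * ↑t + ↑c) : ℂ)
        = ((a*t^2 + 3/2*t + c : ℝ) : ℂ) by push_cast; ring] at h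
    exact Complex.zero_le_real.mp h
  have ha : 0 < a := by
    rcases h1.lt_or_eq with h | h
    · exact h
    · have := h2 (-(2/3)*(c+1)); nlinarith
  have hac : 9 ≤ 16 * (a * c) := by
    have h := hq ![(-3:ℂ),0,0,((4*a:ℝ):ℂ)]
    simp [R, Matrix.mulVec, dotProduct, Fin.sum_univ_four, map_ofNat] at h
    have h' := sub_nonneg.mpr h
    rw [show ((4:ℂ) * ↑a * (-(3 / 4 * 3) + ↑c * (4 * ↑a)) - 3 * (-(↑a * 3) + 3 / 4 * (4 * ↑a)) : ℂ)
        = ((16*a^2*c - 9*a : ℝ) : ℂ) by push_cast; ring] at h'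
    have := Complex.zero_le_real.mp h'
    nlinarith
  have hc : 0 < c := by nlinarith
  have hd : a * c ≠ Complex.normSq b := by
    intro heq
    have hb' : b * (starRingEnd ℂ) b = ((a*c : ℝ) : ℂ) := by
      rw [Complex.mul_conj, ← heq]
    push_cast at hb'
    have h := hq ![((a*c:ℝ):ℂ), -(a:ℂ) * (starRingEnd ℂ) b, -((c/2:ℝ):ℂ), 0]
    simp [R, Matrix.mulVec, dotProduct, Fin.sum_univ_four] at h
    have h' := sub_nonneg.mpr h
    rw [show (↑a * ↑c * (↑a * (↑a * ↑c) + -(b * (↑a * (starRingEnd ℂ) b)) + -(2⁻¹ * (↑c / 2))) -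
        (↑c / (starRingEnd ℂ) 2 * (2⁻¹ * (↑a * ↑c) + -(↑a * (↑c / 2))) +
          ↑a * b * ((starRingEnd ℂ) b * (↑a * ↑c) + -(↑c * (↑a * (starRingEnd ℂ) b)))) : ℂ)
        = ((-(a*c^2/4) : ℝ) : ℂ) by
      push_cast [map_ofNat]
      linear_combination (-(a:ℂ)^2*c) * hb'] at h'
    have := Complex.zero_le_real.mp h'
    nlinarith
  have hcC : (c:ℂ) ≠ 0 := Complex.ofReal_ne_zero.mpr hc.ne'
  set D : ℂ := (a:ℂ)*c - b * (starRingEnd ℂ) b with hDdef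
  have hD : D ≠ 0 := by
    rw [hDdef, Complex.mul_conj]
    rw [show ((a:ℂ)*c - ↑(Complex.normSq b)) = ((a*c - Complex.normSq b : ℝ) : ℂ) by push_cast; ring]
    exact Complex.ofReal_ne_zero.mpr (sub_ne_zero.mpr hd)
  have key : ∀ x : Fin 4 → ℂ, R *ᵥ x = 0 →
      (c:ℂ) * x 1 = -((starRingEnd ℂ) b) * x 0 ∧
      D * x 2 = x 0 * (3*b/4 - c/2) ∧
      D * x 3 = x 0 * ((starRingEnd ℂ) b/2 - 3*a/4) := by
    intro x hx
    have e1 := congrFun hx 1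
    have e2 := congrFun hx 2
    have e3 := congrFun hx 3
    simp [R, Matrix.mulVec, dotProduct, Fin.sum_univ_four] at e1 e2 e3
    refine ⟨by linear_combination e1, ?_, ?_⟩
    · linear_combination x 2 * hDdef + (c:ℂ) * e2 - b * e3
    · linear_combination x 3 * hDdef + (a:ℂ) * e3 - (starRingEnd ℂ) b * e2
  obtain ⟨kv1, kv2, kv3⟩ := key v hv
  obtain ⟨kw1, kw2, kw3⟩ := key w hw
  by_cases h0 : v 0 = 0
  · refine ⟨1, 0, by simp, ?_⟩
    have z1 : v 1 = 0 := by
      have : (c:ℂ) * v 1 = 0 := by rw [kv1, h0]; ring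
      exact ((mul_eq_zero.mp this).resolve_left hcC)
    have z2 : v 2 = 0 := by
      have : D * v 2 = 0 := by rw [kv2, h0]; ring
      exact ((mul_eq_zero.mp this).resolve_left hD)
    have z3 : v 3 = 0 := by
      have : D * v 3 = 0 := by rw [kv3, h0]; ring
      exact ((mul_eq_zero.mp this).resolve_left hD)
    funext i
    fin_cases i
    · show (1:ℂ) * v 0 + 0 * w 0 = 0; rw [h0]; ring
    · show (1:ℂ) * v 1 + 0 * w 1 = 0; rw [z1]; ring
    · show (1:ℂ) * v 2 + 0 * w 2 = 0; rw [z2]; ring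
    · show (1:ℂ) * v 3 + 0 * w 3 = 0; rw [z3]; ring
  · refine ⟨w 0, -(v 0), by simp [Prod.ext_iff, h0], ?_⟩
    funext i
    fin_cases i
    · show w 0 * v 0 + -(v 0) * w 0 = 0; ring
    · show w 0 * v 1 + -(v 0) * w 1 = 0
      have : (c:ℂ) * (w 0 * v 1 + -(v 0) * w 1) = 0 := by
        linear_combination w 0 * kv1 - v 0 * kw1
      exact ((mul_eq_zero.mp this).resolve_left hcC)
    · show w 0 * v 2 + -(v 0) * w 2 = 0
      have : D * (w 0 * v 2 + -(v 0) * w 2) = 0 := by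
        linear_combination w 0 * kv2 - v 0 * kw2
      exact ((mul_eq_zero.mp this).resolve_left hD)
    · show w 0 * v 3 + -(v 0) * w 3 = 0
      have : D * (w 0 * v 3 + -(v 0) * w 3) = 0 := by
        linear_combination w 0 * kv3 - v 0 * kw3
      exact ((mul_eq_zero.mp this).resolve_left hD)
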